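/- Let Δ be a nonevasive finite simplicial complex. Then Δ is contractible (has the homotopy type of a point). -/

import Mathlib

open scoped Classical

/-- An abstract simplicial complex as a finite family of nonempty finite faces,
closed under taking nonempty subsets, containing all its vertices as singletons. -/
def IsComplex {V : Type*} (K : Finset (Finset V)) : Prop :=
  (∀ σ ∈ K, σ.Nonempty) ∧ (∀ σ ∈ K, ∀ τ ⊆ σ, τ.Nonempty → τ ∈ K)

/-- The deletion of a vertex from a simplicial complex. -/
noncomputable def dlF {V : Type*} (K : Finset (Finset V)) (v : V) : Finset (Finset V) :=
  K.filter fun σ => v ∉ σ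

/-- The link of a vertex in a simplicial complex. -/
noncomputable def lkF {V : Type*} (K : Finset (Finset V)) (v : V) : Finset (Finset V) :=
  K.filter fun σ => v ∉ σ ∧ insert v σ ∈ K

/-- Nonevasiveness: a point is nonevasive, and `K` is nonevasive if some vertex has
nonevasive link and deletion. -/
inductive Nonevasive {V : Type*} : Finset (Finset V) → Prop
  | point (v : V) : Nonevasive {{v}}
  | step (K : Finset (Finset V)) (v : V) (hv : {v} ∈ K)
      (hlk : Nonevasive (lkF K v)) (hdl : Nonevasive (dlF K v)) : Nonevasive K

/-- Collapsibility: `K` can be reduced to a point by elementary collapses, where an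
elementary collapse removes a pair `(σ, τ)` with `σ` a proper face of exactly one face `τ`. -/
inductive Collapsible {V : Type*} : Finset (Finset V) → Prop
  | point (v : V) : Collapsible {{v}}
  | collapse (K : Finset (Finset V)) (σ τ : Finset V) (hσ : σ ∈ K) (hτ : τ ∈ K)
      (hst : σ ⊂ τ) (huniq : ∀ ρ ∈ K, σ ⊂ ρ → ρ = τ)
      (h : Collapsible (K \ {σ, τ})) : Collapsible K

/-- The order complex of the subposet `S` of `P`: faces are the nonempty chains in `S`. -/
noncomputable def orderComplexOn (P : Type*) [Fintype P] [PartialOrder P] (S : Set P) :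
    Finset (Finset P) :=
  Finset.univ.filter fun σ => σ.Nonempty ∧ ↑σ ⊆ S ∧ IsChain (· ≤ ·) (σ : Set P)

/-- The geometric realization of a finite simplicial complex on vertex set V, as a
subspace of V → ℝ. -/
def realization {V : Type*} [Fintype V] (K : Finset (Finset V)) : Set (V → ℝ) :=
  {f | (∀ v, 0 ≤ f v) ∧ (∑ v, f v) = 1 ∧
    (Finset.univ.filter fun v => f v ≠ 0) ∈ K}

/- ======================================================================= -/
/- Auxiliary development                                                    -/
/- ======================================================================= -/

namespace NonevasiveAux

open ContinuousMap

noncomputable section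

variable {V : Type*} [Fintype V]

/-- The vertex `w` as a point of the realization. -/
def eind (w : V) : V → ℝ := fun u => if u = w then 1 else 0

lemma sum_eind (w : V) : ∑ u, eind w u = 1 := by
  unfold eind
  rw [Finset.sum_ite_eq' Finset.univ w (fun _ => (1 : ℝ))]
  simp

lemma eind_mem {M : Finset (Finset V)} {w : V} (hw : {w} ∈ M) : eind w ∈ realization M := by
  refine ⟨fun u => ?_, sum_eind w, ?_⟩
  · unfold eind; split <;> norm_num
  · have h : (Finset.univ.filter fun u => eind w u ≠ 0) = {w} := by
      ext u
      by_cases h : u = w <;> simp [eind, h]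
    rw [h]; exact hw

lemma realization_mono {M N : Finset (Finset V)} (h : M ⊆ N) :
    realization M ⊆ realization N := fun f hf => ⟨hf.1, hf.2.1, h hf.2.2⟩

lemma apply_le_one {M : Finset (Finset V)} {x : V → ℝ} (hx : x ∈ realization M) (u : V) :
    x u ≤ 1 := by
  have h := Finset.single_le_sum (f := x) (fun i _ => hx.1 i) (Finset.mem_univ u)
  rw [hx.2.1] at h
  exact h

lemma isComplex_lkF {K : Finset (Finset V)} (hK : IsComplex K) (v : V) :
    IsComplex (lkF K v) := by
  constructor
  · intro σ hσ
    rw [lkF, Finset.mem_filter] at hσ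
    exact hK.1 σ hσ.1
  · intro σ hσ τ hτσ hτ
    rw [lkF, Finset.mem_filter] at hσ ⊢
    refine ⟨hK.2 σ hσ.1 τ hτσ hτ, fun hvτ => hσ.2.1 (hτσ hvτ), ?_⟩
    refine hK.2 _ hσ.2.2 _ ?_ ⟨v, Finset.mem_insert_self _ _⟩
    exact Finset.insert_subset_insert v hτσ

lemma isComplex_dlF {K : Finset (Finset V)} (hK : IsComplex K) (v : V) :
    IsComplex (dlF K v) := by
  constructor
  · intro σ hσ
    rw [dlF, Finset.mem_filter] at hσ
    exact hK.1 σ hσ.1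
  · intro σ hσ τ hτσ hτ
    rw [dlF, Finset.mem_filter] at hσ ⊢
    exact ⟨hK.2 σ hσ.1 τ hτσ hτ, fun hvτ => hσ.2 (hτσ hvτ)⟩

lemma Nonevasive.exists_singleton {W : Type*} {M : Finset (Finset W)}
    (h : Nonevasive M) : ∃ w, {w} ∈ M := by
  cases h with
  | point w => exact ⟨w, Finset.mem_singleton_self _⟩
  | step K v hv _ _ => exact ⟨v, hv⟩

lemma lk_apply_eq_zero {K : Finset (Finset V)} {v : V} {z : V → ℝ}
    (hz : z ∈ realization (lkF K v)) : z v = 0 := by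
  have h := hz.2.2
  rw [lkF, Finset.mem_filter] at h
  by_contra hzv
  exact h.2.1 (Finset.mem_filter.mpr ⟨Finset.mem_univ v, hzv⟩)

/-- The realization of a complex is compact. -/
lemma realization_isCompact {K : Finset (Finset V)} (hK : IsComplex K) :
    IsCompact (realization K) := by
  have hcover : realization K =
      ⋃ σ ∈ K, {f : V → ℝ | (∀ u, 0 ≤ f u) ∧ (∑ u, f u) = 1 ∧ ∀ u ∉ σ, f u = 0} := by
    ext f
    constructor
    · rintro ⟨h1, h2, h3⟩
      refine Set.mem_biUnion h3 ⟨h1, h2, fun u hu => ?_⟩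
      by_contra hne
      exact hu (Finset.mem_filter.mpr ⟨Finset.mem_univ u, hne⟩)
    · intro hf
      simp only [Set.mem_iUnion] at hf
      obtain ⟨σ, hσ, h1, h2, h3⟩ := hf
      refine ⟨h1, h2, ?_⟩
      have hsub : (Finset.univ.filter fun u => f u ≠ 0) ⊆ σ := by
        intro u hu
        rw [Finset.mem_filter] at hu
        by_contra h
        exact hu.2 (h3 u h)
      have hne : (Finset.univ.filter fun u => f u ≠ 0).Nonempty := by
        have hsne : (∑ u, f u) ≠ 0 := by rw [h2]; norm_num
        obtain ⟨u, _, hu⟩ := Finset.exists_ne_zero_of_sum_ne_zero hsne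
        exact ⟨u, Finset.mem_filter.mpr ⟨Finset.mem_univ u, hu⟩⟩
      exact hK.2 σ hσ _ hsub hne
  rw [hcover]
  refine Set.Finite.isCompact_biUnion K.finite_toSet fun σ _ => ?_
  refine IsCompact.of_isClosed_subset
    (isCompact_univ_pi fun _ => isCompact_Icc (a := (0 : ℝ)) (b := 1)) ?_ ?_
  · have heq : {f : V → ℝ | (∀ u, 0 ≤ f u) ∧ (∑ u, f u) = 1 ∧ ∀ u ∉ σ, f u = 0} =
        (⋂ u, {f : V → ℝ | 0 ≤ f u}) ∩
          ({f : V → ℝ | (∑ u, f u) = 1} ∩ ⋂ u, ⋂ (_ : u ∉ σ), {f : V → ℝ | f u = 0}) := by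
      ext f
      simp only [Set.mem_setOf_eq, Set.mem_inter_iff, Set.mem_iInter]
    rw [heq]
    refine IsClosed.inter (isClosed_iInter fun u => ?_) (IsClosed.inter ?_ ?_)
    · exact isClosed_le continuous_const (continuous_apply u)
    · exact isClosed_eq (by exact continuous_finset_sum _ fun i _ => continuous_apply i)
        continuous_const
    · exact isClosed_iInter fun u => isClosed_iInter fun _ =>
        isClosed_eq (continuous_apply u) continuous_const
  · intro f hf u _
    refine ⟨hf.1 u, ?_⟩
    have h := Finset.single_le_sum (f := f) (fun i _ => hf.1 i) (Finset.mem_univ u)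
    rw [hf.2.1] at h
    exact h

/- ----------------------------------------------------------------------- -/
/- The star construction                                                    -/
/- ----------------------------------------------------------------------- -/

/-- Convex combination of the vertex `v` (weight `s`) and a point `z` of the link. -/
def mix (v : V) (s : ℝ) (z : V → ℝ) : V → ℝ := fun u => if u = v then s else (1 - s) * z u

lemma mix_mem (K : Finset (Finset V)) (v : V) (hK : IsComplex K) (hv : {v} ∈ K)
    {z : V → ℝ} {s : ℝ} (hz : z ∈ realization (lkF K v))
    (h0 : 0 ≤ s) (h1 : s ≤ 1) : mix v s z ∈ realization K := by
  have hzv : z v = 0 := lk_apply_eq_zero hz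
  obtain ⟨znn, zsum, zsupp⟩ := hz
  rw [lkF, Finset.mem_filter] at zsupp
  refine ⟨fun u => ?_, ?_, ?_⟩
  · unfold mix; split
    · exact h0
    · exact mul_nonneg (by linarith) (znn u)
  · have hrw : ∀ u, mix v s z u = (if u = v then s else 0) + (1 - s) * z u := by
      intro u; by_cases h : u = v <;> simp [mix, h, hzv]
    simp only [hrw]
    rw [Finset.sum_add_distrib, Finset.sum_ite_eq' Finset.univ v (fun _ => s),
      ← Finset.mul_sum, zsum]
    simp
  · rcases eq_or_lt_of_le h0 with hs0 | hs0
    · have hmz : mix v s z = z := by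
        funext u; by_cases h : u = v <;> simp [mix, h, ← hs0, hzv]
      rw [hmz]; exact zsupp.1
    rcases eq_or_lt_of_le h1 with hs1 | hs1
    · have hsupp : (Finset.univ.filter fun u => mix v s z u ≠ 0) = {v} := by
        subst hs1
        ext u; by_cases h : u = v <;> simp [mix, h]
      rw [hsupp]; exact hv
    · have hsupp : (Finset.univ.filter fun u => mix v s z u ≠ 0)
          = insert v (Finset.univ.filter fun u => z u ≠ 0) := by
        ext u
        by_cases h : u = v
        · simp only [Finset.mem_filter, Finset.mem_insert, Finset.mem_univ, true_and]; simp [mix, h, ne_of_gt hs0]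
        · have hne : (1 : ℝ) - s ≠ 0 := by linarith
          simp only [Finset.mem_filter, Finset.mem_insert, Finset.mem_univ, true_and]; simp [mix, h, mul_ne_zero_iff, hne]
      rw [hsupp]
      exact zsupp.2.2

/-- Decomposition of a point of `|K|` with `0 < x v < 1` as a mix. -/
lemma exists_mix (K : Finset (Finset V)) (v : V) (hK : IsComplex K) {x : V → ℝ} (hx : x ∈ realization K)
    (h0 : x v ≠ 0) (h1 : x v ≠ 1) :
    ∃ z ∈ realization (lkF K v), mix v (x v) z = x := by
  obtain ⟨xnn, xsum, xsupp⟩ := hx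
  have hsle : x v ≤ 1 := apply_le_one ⟨xnn, xsum, xsupp⟩ v
  have hslt : x v < 1 := lt_of_le_of_ne hsle h1
  have hpos : (0 : ℝ) < 1 - x v := by linarith
  have hne : (1 : ℝ) - x v ≠ 0 := ne_of_gt hpos
  refine ⟨fun u => if u = v then 0 else x u / (1 - x v), ⟨?_, ?_, ?_⟩, ?_⟩
  · intro u
    dsimp only
    split_ifs with h
    · exact le_refl 0
    · exact div_nonneg (xnn u) (le_of_lt hpos)
  · have hrw : ∀ u, (if u = v then (0 : ℝ) else x u / (1 - x v))
        = (x u - if u = v then x u else 0) / (1 - x v) := by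
      intro u; by_cases h : u = v <;> simp [h]
    dsimp only
    simp only [hrw]
    rw [← Finset.sum_div, Finset.sum_sub_distrib,
      Finset.sum_ite_eq' Finset.univ v (fun u => x u), xsum]
    simp only [Finset.mem_univ, if_true]
    field_simp
  · have hsupp : (Finset.univ.filter fun u =>
          (if u = v then (0 : ℝ) else x u / (1 - x v)) ≠ 0)
        = (Finset.univ.filter fun u => x u ≠ 0).erase v := by
      ext u
      by_cases h : u = v <;> simp [h, Finset.mem_erase, div_ne_zero_iff, hne]
    dsimp only
    rw [hsupp, lkF, Finset.mem_filter]
    have hvmem : v ∈ Finset.univ.filter fun u => x u ≠ 0 :=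
      Finset.mem_filter.mpr ⟨Finset.mem_univ v, h0⟩
    have hins : insert v ((Finset.univ.filter fun u => x u ≠ 0).erase v)
        = Finset.univ.filter fun u => x u ≠ 0 := Finset.insert_erase hvmem
    have hnonempty : ((Finset.univ.filter fun u => x u ≠ 0).erase v).Nonempty := by
      have hsum2 : ∑ u ∈ Finset.univ.erase v, x u = 1 - x v := by
        have h := Finset.sum_erase_add Finset.univ x (Finset.mem_univ v)
        rw [xsum] at h
        linarith
      have hsne : (∑ u ∈ Finset.univ.erase v, x u) ≠ 0 := by rw [hsum2]; exact hne
      obtain ⟨u, hu, hune⟩ := Finset.exists_ne_zero_of_sum_ne_zero hsne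
      exact ⟨u, Finset.mem_erase.mpr ⟨(Finset.mem_erase.mp hu).1,
        Finset.mem_filter.mpr ⟨Finset.mem_univ u, hune⟩⟩⟩
    refine ⟨hK.2 _ xsupp _ (Finset.erase_subset _ _) hnonempty,
      Finset.notMem_erase _ _, ?_⟩
    rw [hins]; exact xsupp
  · funext u
    by_cases h : u = v
    · simp [mix, h]
    · simp only [mix, if_neg h]
      field_simp

/-- The map from the cone on the link onto the closed star of `v` in `|K|`. -/
def QQ (K : Finset (Finset V)) (v : V) (hK : IsComplex K) (hv : {v} ∈ K)
    (p : ↥(realization (lkF K v)) × unitInterval) : ↥(realization K) :=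
  ⟨mix v p.2.1 p.1.1, mix_mem K v hK hv p.1.2 p.2.2.1 p.2.2.2⟩

lemma continuous_QQ (K : Finset (Finset V)) (v : V) (hK : IsComplex K) (hv : {v} ∈ K) : Continuous (QQ K v hK hv) := by
  apply Continuous.subtype_mk
  apply continuous_pi
  intro u
  by_cases hu : u = v
  · simp only [mix, if_pos hu]
    exact continuous_subtype_val.comp continuous_snd
  · simp only [mix, if_neg hu]
    exact (continuous_const.sub (continuous_subtype_val.comp continuous_snd)).mul
      ((continuous_apply u).comp (continuous_subtype_val.comp continuous_fst))

lemma QQ_coord_v (K : Finset (Finset V)) (v : V) (hK : IsComplex K) (hv : {v} ∈ K) (p : ↥(realization (lkF K v)) × unitInterval) :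
    (QQ K v hK hv p : V → ℝ) v = p.2.1 := by
  simp [QQ, mix]

/-- Every point of `|K|` is either in the deletion or in the star. -/
lemma cover (K : Finset (Finset V)) (v : V) (hK : IsComplex K) (hv : {v} ∈ K) {z₀ : V → ℝ} (hz₀ : z₀ ∈ realization (lkF K v))
    (x : ↥(realization K)) :
    (x : V → ℝ) v = 0 ∨ ∃ p, QQ K v hK hv p = x := by
  by_cases h0 : (x : V → ℝ) v = 0
  · exact Or.inl h0
  right
  by_cases h1 : (x : V → ℝ) v = 1
  · refine ⟨(⟨z₀, hz₀⟩, 1), Subtype.ext ?_⟩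
    have hz : ∀ u, u ≠ v → (x : V → ℝ) u = 0 := by
      intro u hu
      have hsum2 : ∑ w ∈ Finset.univ.erase v, (x : V → ℝ) w = 0 := by
        have h := Finset.sum_erase_add Finset.univ (x : V → ℝ) (Finset.mem_univ v)
        rw [x.2.2.1] at h
        rw [h1] at h
        linarith
      exact (Finset.sum_eq_zero_iff_of_nonneg (fun i _ => x.2.1 i)).mp hsum2 u
        (Finset.mem_erase.mpr ⟨hu, Finset.mem_univ u⟩)
    show mix v ((1 : unitInterval) : ℝ) z₀ = (x : V → ℝ)
    funext u
    by_cases h : u = v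
    · simp [mix, h, h1]
    · simp [mix, h, hz u h]
  · obtain ⟨z, hzmem, hzx⟩ := exists_mix K v hK x.2 h0 h1
    exact ⟨(⟨z, hzmem⟩, ⟨(x : V → ℝ) v, x.2.1 v, apply_le_one x.2 v⟩), Subtype.ext hzx⟩

/- ----------------------------------------------------------------------- -/
/- Reparametrizations                                                       -/
/- ----------------------------------------------------------------------- -/

/-- Link-contraction time. -/
def tA (s t : unitInterval) : unitInterval :=
  ⟨s.1 * min (2 * t.1) 1, by
    have hm0 : (0 : ℝ) ≤ min (2 * t.1) 1 := le_min (by nlinarith [t.2.1]) zero_le_one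
    have hm1 : min (2 * t.1) 1 ≤ 1 := min_le_right _ _
    exact ⟨mul_nonneg s.2.1 hm0, by nlinarith [s.2.1, s.2.2]⟩⟩

/-- Cone height. -/
def tB (s t : unitInterval) : unitInterval :=
  ⟨s.1 * min (2 - 2 * t.1) 1, by
    have hm0 : (0 : ℝ) ≤ min (2 - 2 * t.1) 1 := le_min (by nlinarith [t.2.2]) zero_le_one
    have hm1 : min (2 - 2 * t.1) 1 ≤ 1 := min_le_right _ _
    exact ⟨mul_nonneg s.2.1 hm0, by nlinarith [s.2.1, s.2.2]⟩⟩

lemma tA_zero (s : unitInterval) : tA s 0 = 0 := by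
  apply Subtype.ext
  show s.1 * min (2 * ((0 : unitInterval) : ℝ)) 1 = 0
  norm_num

lemma tB_zero (s : unitInterval) : tB s 0 = s := by
  apply Subtype.ext
  show s.1 * min (2 - 2 * ((0 : unitInterval) : ℝ)) 1 = s.1
  norm_num

lemma tA_one (s : unitInterval) : tA s 1 = s := by
  apply Subtype.ext
  show s.1 * min (2 * ((1 : unitInterval) : ℝ)) 1 = s.1
  norm_num

lemma tB_one (s : unitInterval) : tB s 1 = 0 := by
  apply Subtype.ext
  show s.1 * min (2 - 2 * ((1 : unitInterval) : ℝ)) 1 = 0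
  norm_num

lemma tA_szero (t : unitInterval) {s : unitInterval} (hs : (s : ℝ) = 0) : tA s t = 0 := by
  apply Subtype.ext
  show s.1 * min (2 * t.1) 1 = 0
  rw [hs, zero_mul]

lemma tB_szero (t : unitInterval) {s : unitInterval} (hs : (s : ℝ) = 0) : tB s t = 0 := by
  apply Subtype.ext
  show s.1 * min (2 - 2 * t.1) 1 = 0
  rw [hs, zero_mul]

lemma continuous_tA : Continuous fun st : unitInterval × unitInterval => tA st.1 st.2 := by
  apply Continuous.subtype_mk
  exact (continuous_subtype_val.comp continuous_fst).mul
    ((continuous_const.mul (continuous_subtype_val.comp continuous_snd)).min continuous_const)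

lemma continuous_tB : Continuous fun st : unitInterval × unitInterval => tB st.1 st.2 := by
  apply Continuous.subtype_mk
  exact (continuous_subtype_val.comp continuous_fst).mul
    ((continuous_const.sub
      (continuous_const.mul (continuous_subtype_val.comp continuous_snd))).min continuous_const)

/- ----------------------------------------------------------------------- -/
/- The deformation                                                          -/
/- ----------------------------------------------------------------------- -/

/-- The deformation on the cone coordinates. -/
def Phi (K : Finset (Finset V)) (v : V) (hK : IsComplex K) (hv : {v} ∈ K)
    (G : C(unitInterval × ↥(realization (lkF K v)), ↥(realization (lkF K v)))) (t : unitInterval) (p : ↥(realization (lkF K v)) × unitInterval) :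
    ↥(realization K) :=
  QQ K v hK hv (G (tA p.2 t, p.1), tB p.2 t)

lemma continuous_Phi (K : Finset (Finset V)) (v : V) (hK : IsComplex K) (hv : {v} ∈ K)
    (G : C(unitInterval × ↥(realization (lkF K v)), ↥(realization (lkF K v)))) :
    Continuous fun z : unitInterval × (↥(realization (lkF K v)) × unitInterval) =>
      Phi K v hK hv G z.1 z.2 := by
  apply (continuous_QQ K v hK hv).comp
  apply Continuous.prodMk
  · exact G.continuous.comp
      ((continuous_tA.comp ((continuous_snd.comp continuous_snd).prodMk continuous_fst)).prodMk
        (continuous_fst.comp continuous_snd))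
  · exact continuous_tB.comp ((continuous_snd.comp continuous_snd).prodMk continuous_fst)

lemma Phi_zero (K : Finset (Finset V)) (v : V) (hK : IsComplex K) (hv : {v} ∈ K)
    (G : C(unitInterval × ↥(realization (lkF K v)), ↥(realization (lkF K v)))) (hG0 : ∀ y, G (0, y) = y) (p : ↥(realization (lkF K v)) × unitInterval) :
    Phi K v hK hv G 0 p = QQ K v hK hv p := by
  unfold Phi
  rw [tA_zero, tB_zero, hG0]

/-- Well-definedness: the deformation only depends on the image point in the star. -/
lemma Phi_congr (K : Finset (Finset V)) (v : V) (hK : IsComplex K) (hv : {v} ∈ K)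
    (G : C(unitInterval × ↥(realization (lkF K v)), ↥(realization (lkF K v)))) {q : ↥(realization (lkF K v))} (hG1 : ∀ y, G (1, y) = q)
    {p p' : ↥(realization (lkF K v)) × unitInterval}
    (h : QQ K v hK hv p = QQ K v hK hv p') (t : unitInterval) :
    Phi K v hK hv G t p = Phi K v hK hv G t p' := by
  have hcoord : (p.2 : ℝ) = (p'.2 : ℝ) := by
    have h1 := QQ_coord_v K v hK hv p
    have h2 := QQ_coord_v K v hK hv p'
    rw [← h1, ← h2, h]
  have hs : p.2 = p'.2 := Subtype.ext hcoord
  by_cases h1 : (p.2 : ℝ) = 1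
  · have h1' : (p'.2 : ℝ) = 1 := by rw [← hcoord]; exact h1
    by_cases ht : (t : ℝ) ≤ 1 / 2
    · have hB : ∀ s : unitInterval, (s : ℝ) = 1 → tB s t = 1 := by
        intro s hs1
        apply Subtype.ext
        show s.1 * min (2 - 2 * t.1) 1 = 1
        rw [hs1, min_eq_right (by linarith : (1 : ℝ) ≤ 2 - 2 * t.1)]
        ring
      unfold Phi
      apply Subtype.ext
      show mix v ((tB p.2 t : ℝ)) _ = mix v ((tB p'.2 t : ℝ)) _
      rw [hB p.2 h1, hB p'.2 h1']
      funext u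
      by_cases hu : u = v <;> simp [mix, hu]
    · have hA : ∀ s : unitInterval, (s : ℝ) = 1 → tA s t = 1 := by
        intro s hs1
        apply Subtype.ext
        show s.1 * min (2 * t.1) 1 = 1
        rw [hs1, min_eq_right (by linarith : (1 : ℝ) ≤ 2 * t.1)]
        ring
      unfold Phi
      rw [hA p.2 h1, hA p'.2 h1', hG1, hG1, hs]
  · have hne : (1 : ℝ) - (p.2 : ℝ) ≠ 0 := by
      intro hc
      apply h1
      linarith
    have hz : p.1 = p'.1 := by
      apply Subtype.ext
      funext u
      by_cases hu : u = v
      · rw [hu, lk_apply_eq_zero p.1.2, lk_apply_eq_zero p'.1.2]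
      · have hcu : (QQ K v hK hv p : V → ℝ) u = (QQ K v hK hv p' : V → ℝ) u := by rw [h]
        simp only [QQ, mix, if_neg hu] at hcu
        rw [← hcoord] at hcu
        exact mul_left_cancel₀ hne hcu
    simp only [Phi, hz, hs]

/-- The full deformation map on `|K|`. -/
def hFun (K : Finset (Finset V)) (v : V) (hK : IsComplex K) (hv : {v} ∈ K)
    (G : C(unitInterval × ↥(realization (lkF K v)), ↥(realization (lkF K v)))) (tx : unitInterval × ↥(realization K)) : ↥(realization K) :=
  if hx : ∃ p, QQ K v hK hv p = tx.2 then Phi K v hK hv G tx.1 (Classical.choose hx)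
  else tx.2

lemma hFun_spec (K : Finset (Finset V)) (v : V) (hK : IsComplex K) (hv : {v} ∈ K)
    (G : C(unitInterval × ↥(realization (lkF K v)), ↥(realization (lkF K v)))) {q : ↥(realization (lkF K v))} (hG1 : ∀ y, G (1, y) = q)
    (t : unitInterval) (x : ↥(realization K))
    {p : ↥(realization (lkF K v)) × unitInterval} (hp : QQ K v hK hv p = x) :
    hFun K v hK hv G (t, x) = Phi K v hK hv G t p := by
  have hx : ∃ p, QQ K v hK hv p = x := ⟨p, hp⟩
  unfold hFun
  rw [dif_pos hx]
  exact Phi_congr K v hK hv G hG1 ((Classical.choose_spec hx).trans hp.symm) t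

lemma hFun_zero (K : Finset (Finset V)) (v : V) (hK : IsComplex K) (hv : {v} ∈ K)
    (G : C(unitInterval × ↥(realization (lkF K v)), ↥(realization (lkF K v)))) (hG0 : ∀ y, G (0, y) = y) (x : ↥(realization K)) :
    hFun K v hK hv G (0, x) = x := by
  unfold hFun
  by_cases hx : ∃ p, QQ K v hK hv p = x
  · rw [dif_pos hx, Phi_zero K v hK hv G hG0, Classical.choose_spec hx]
  · rw [dif_neg hx]

lemma hFun_dl (K : Finset (Finset V)) (v : V) (hK : IsComplex K) (hv : {v} ∈ K)
    (G : C(unitInterval × ↥(realization (lkF K v)), ↥(realization (lkF K v)))) {q : ↥(realization (lkF K v))} (hG0 : ∀ y, G (0, y) = y)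
    (hG1 : ∀ y, G (1, y) = q) (t : unitInterval) {x : ↥(realization K)}
    (hxv : (x : V → ℝ) v = 0) : hFun K v hK hv G (t, x) = x := by
  by_cases hx : ∃ p, QQ K v hK hv p = x
  · obtain ⟨p, hp⟩ := hx
    have hs0 : (p.2 : ℝ) = 0 := by
      rw [← QQ_coord_v K v hK hv p, hp]; exact hxv
    rw [hFun_spec K v hK hv G hG1 t x hp]
    unfold Phi
    rw [tA_szero _ hs0, tB_szero _ hs0, hG0]
    rw [← hp]
    apply Subtype.ext
    show mix v ((0 : unitInterval) : ℝ) (p.1 : V → ℝ) = mix v (p.2 : ℝ) (p.1 : V → ℝ)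
    rw [show ((0 : unitInterval) : ℝ) = 0 from rfl, ← hs0]
  · unfold hFun
    rw [dif_neg hx]

lemma hFun_one_v (K : Finset (Finset V)) (v : V) (hK : IsComplex K) (hv : {v} ∈ K)
    (G : C(unitInterval × ↥(realization (lkF K v)), ↥(realization (lkF K v)))) {q : ↥(realization (lkF K v))} (hG0 : ∀ y, G (0, y) = y)
    (hG1 : ∀ y, G (1, y) = q) {z₀ : V → ℝ} (hz₀ : z₀ ∈ realization (lkF K v))
    (x : ↥(realization K)) : (hFun K v hK hv G (1, x) : V → ℝ) v = 0 := by
  rcases cover K v hK hv hz₀ x with h0 | ⟨p, hp⟩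
  · rw [hFun_dl K v hK hv G hG0 hG1 1 h0]; exact h0
  · rw [hFun_spec K v hK hv G hG1 1 x hp]
    unfold Phi
    rw [tB_one]
    simpa using QQ_coord_v K v hK hv (G (tA p.2 1, p.1), (0 : unitInterval))

lemma hFun_continuous (K : Finset (Finset V)) (v : V) (hK : IsComplex K) (hv : {v} ∈ K)
    (G : C(unitInterval × ↥(realization (lkF K v)), ↥(realization (lkF K v)))) {q : ↥(realization (lkF K v))} (hG0 : ∀ y, G (0, y) = y)
    (hG1 : ∀ y, G (1, y) = q) {z₀ : V → ℝ} (hz₀ : z₀ ∈ realization (lkF K v)) :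
    Continuous (hFun K v hK hv G) := by
  haveI : CompactSpace ↥(realization (lkF K v)) :=
    isCompact_iff_compactSpace.mp (realization_isCompact (isComplex_lkF hK v))
  set Q := QQ K v hK hv with hQdef
  have hQc : Continuous Q := continuous_QQ K v hK hv
  set Sstar : Set ↥(realization K) := Set.range Q with hSdef
  have hSclosed : IsClosed Sstar := (isCompact_range hQc).isClosed
  set Sdl : Set ↥(realization K) := {x | (x : V → ℝ) v = 0} with hDdef
  have hDclosed : IsClosed Sdl :=
    isClosed_eq ((continuous_apply v).comp continuous_subtype_val) continuous_const
  refine LocallyFinite.continuous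
    (f := fun b : Bool => if b then (Set.univ ×ˢ Sstar) else (Set.univ ×ˢ Sdl))
    (locallyFinite_of_finite _) ?_ ?_ ?_
  · apply Set.eq_univ_iff_forall.mpr
    intro tx
    rcases cover K v hK hv hz₀ tx.2 with h0 | hp
    · exact Set.mem_iUnion.mpr ⟨false, show tx ∈ Set.univ ×ˢ Sdl from ⟨Set.mem_univ _, h0⟩⟩
    · exact Set.mem_iUnion.mpr ⟨true, show tx ∈ Set.univ ×ˢ Sstar from ⟨Set.mem_univ _, hp⟩⟩
  · intro b
    cases b
    · show IsClosed ((Set.univ : Set unitInterval) ×ˢ Sdl)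
      exact isClosed_univ.prod hDclosed
    · show IsClosed ((Set.univ : Set unitInterval) ×ˢ Sstar)
      exact isClosed_univ.prod hSclosed
  · intro b
    cases b
    · show ContinuousOn (hFun K v hK hv G) (Set.univ ×ˢ Sdl)
      apply ContinuousOn.congr (continuous_snd.continuousOn
        (s := Set.univ ×ˢ Sdl))
      intro tx htx
      exact hFun_dl K v hK hv G hG0 hG1 tx.1 htx.2
    · show ContinuousOn (hFun K v hK hv G) (Set.univ ×ˢ Sstar)
      rw [continuousOn_iff_continuous_restrict]
      set T : Set (unitInterval × ↥(realization K)) := Set.univ ×ˢ Sstar with hTdef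
      show Continuous (T.restrict (hFun K v hK hv G))
      let e : unitInterval × (↥(realization (lkF K v)) × unitInterval) → ↥T :=
        fun z => ⟨(z.1, Q z.2), ⟨Set.mem_univ _, ⟨z.2, rfl⟩⟩⟩
      have hec : Continuous e :=
        Continuous.subtype_mk (continuous_fst.prodMk (hQc.comp continuous_snd)) _
      have hes : Function.Surjective e := by
        rintro ⟨⟨t, x⟩, -, p, hp⟩
        exact ⟨(t, p), Subtype.ext (Prod.ext rfl hp)⟩
      haveI : CompactSpace (unitInterval × (↥(realization (lkF K v)) × unitInterval)) :=
        inferInstance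
      have hqm : Topology.IsQuotientMap e := (hec.isClosedMap).isQuotientMap hec hes
      rw [hqm.continuous_iff]
      have heq : (T.restrict (hFun K v hK hv G)) ∘ e
          = fun z : unitInterval × (↥(realization (lkF K v)) × unitInterval) =>
              Phi K v hK hv G z.1 z.2 := by
        funext z
        exact hFun_spec K v hK hv G hG1 z.1 (Q z.2) rfl
      rw [heq]
      exact continuous_Phi K v hK hv G

/- ----------------------------------------------------------------------- -/
/- The main step                                                            -/
/- ----------------------------------------------------------------------- -/

lemma step_contractible (K : Finset (Finset V)) (v : V) (hK : IsComplex K) (hv : {v} ∈ K) (hne : ∃ w, {w} ∈ lkF K v)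
    (hL : ContractibleSpace ↥(realization (lkF K v)))
    (hD : ContractibleSpace ↥(realization (dlF K v))) :
    ContractibleSpace ↥(realization K) := by
  obtain ⟨w, hw⟩ := hne
  have hz₀ : eind w ∈ realization (lkF K v) := eind_mem hw
  haveI := hL
  haveI := hD
  obtain ⟨q, hqh⟩ := id_nullhomotopic ↥(realization (lkF K v))
  obtain ⟨G⟩ := hqh
  obtain ⟨pD, hpDh⟩ := id_nullhomotopic ↥(realization (dlF K v))
  obtain ⟨F⟩ := hpDh
  set Gc : C(unitInterval × ↥(realization (lkF K v)), ↥(realization (lkF K v))) :=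
    G.toContinuousMap with hGc
  have hG0 : ∀ y, Gc (0, y) = y := fun y => G.apply_zero y
  have hG1 : ∀ y, Gc (1, y) = q := fun y => G.apply_one y
  have hcont : Continuous (hFun K v hK hv Gc) :=
    hFun_continuous K v hK hv Gc hG0 hG1 hz₀
  -- the retraction onto the deletion part
  set R : C(↥(realization K), ↥(realization K)) :=
    ⟨fun x => hFun K v hK hv Gc (1, x),
      hcont.comp (continuous_const.prodMk continuous_id)⟩ with hR
  have hRv : ∀ x, ((R x : ↥(realization K)) : V → ℝ) v = 0 :=
    fun x => hFun_one_v K v hK hv Gc hG0 hG1 hz₀ x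
  -- stage 1: id ≃ R
  have hstage1 : (ContinuousMap.id ↥(realization K)).Homotopic R := by
    refine ⟨{ toFun := hFun K v hK hv Gc
              continuous_toFun := hcont
              map_zero_left := fun x => hFun_zero K v hK hv Gc hG0 x
              map_one_left := fun x => rfl }⟩
  -- R factors through the deletion
  have hRD : ∀ x, ((R x : ↥(realization K)) : V → ℝ) ∈ realization (dlF K v) := by
    intro x
    refine ⟨(R x).2.1, (R x).2.2.1, ?_⟩
    rw [dlF, Finset.mem_filter]
    refine ⟨(R x).2.2.2, ?_⟩
    intro hvmem
    rw [Finset.mem_filter] at hvmem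
    exact hvmem.2 (hRv x)
  let r' : ↥(realization K) → ↥(realization (dlF K v)) := fun x => ⟨(R x : _), hRD x⟩
  have hr'c : Continuous r' :=
    Continuous.subtype_mk (continuous_subtype_val.comp R.continuous) _
  let ι : ↥(realization (dlF K v)) → ↥(realization K) := fun d =>
    ⟨(d : V → ℝ), realization_mono (Finset.filter_subset _ _) d.2⟩
  have hιc : Continuous ι := Continuous.subtype_mk continuous_subtype_val _
  -- stage 2: R ≃ const
  have hstage2 : R.Homotopic (ContinuousMap.const _ (ι pD)) := by
    refine ⟨{ toFun := fun tx => ι (F (tx.1, r' tx.2))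
              continuous_toFun := hιc.comp (F.continuous.comp
                (continuous_fst.prodMk (hr'c.comp continuous_snd)))
              map_zero_left := fun x => ?_
              map_one_left := fun x => ?_ }⟩
    · show ι (F (0, r' x)) = R x
      rw [F.apply_zero]
      exact Subtype.ext rfl
    · show ι (F (1, r' x)) = ι pD
      rw [F.apply_one]
      rfl
  rw [contractible_iff_id_nullhomotopic]
  exact ⟨ι pD, hstage1.trans hstage2⟩

/- ----------------------------------------------------------------------- -/
/- Base case                                                                -/
/- ----------------------------------------------------------------------- -/

lemma singleton_contractible (w : V) :
    ContractibleSpace ↥(realization ({{w}} : Finset (Finset V))) := by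
  have huniq : ∀ f ∈ realization ({{w}} : Finset (Finset V)), f = eind w := by
    intro f hf
    obtain ⟨nn, hsum, hsupp⟩ := hf
    rw [Finset.mem_singleton] at hsupp
    have hzero : ∀ u, u ≠ w → f u = 0 := by
      intro u hu
      by_contra hne
      have hmem : u ∈ ({w} : Finset V) := by
        rw [← hsupp]
        exact Finset.mem_filter.mpr ⟨Finset.mem_univ u, hne⟩
      exact hu (Finset.mem_singleton.mp hmem)
    have hfw : f w = 1 := by
      rw [← hsum, Finset.sum_eq_single w (fun u _ hu => hzero u hu)
        (fun h => absurd (Finset.mem_univ w) h)]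
    funext u
    by_cases hu : u = w
    · rw [hu, hfw]; simp [eind]
    · rw [hzero u hu]; simp [eind, hu]
  rw [contractible_iff_id_nullhomotopic]
  refine ⟨⟨eind w, eind_mem (Finset.mem_singleton_self _)⟩, ?_⟩
  have hext : ContinuousMap.id ↥(realization ({{w}} : Finset (Finset V)))
      = ContinuousMap.const _ ⟨eind w, eind_mem (Finset.mem_singleton_self _)⟩ :=
    ContinuousMap.ext fun y => Subtype.ext (huniq y.1 y.2)
  rw [hext]

end

end NonevasiveAux

/-- A nonevasive finite simplicial complex is contractible. -/
theorem stmt_18 {V : Type*} [Fintype V] (K : Finset (Finset V)) (hK : IsComplex K)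
    (h : Nonevasive K) : ContractibleSpace (realization K) := by
  revert hK
  induction h with
  | point w => exact fun _ => NonevasiveAux.singleton_contractible w
  | step K v hv hlk hdl ihlk ihdl =>
    intro hK
    obtain ⟨w, hw⟩ := NonevasiveAux.Nonevasive.exists_singleton hlk
    exact NonevasiveAux.step_contractible K v hK hv ⟨w, hw⟩
      (ihlk (NonevasiveAux.isComplex_lkF hK v))
      (ihdl (NonevasiveAux.isComplex_dlF hK v))
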